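/- Let A be an odd Jacobi algebra with Q a derivation of the bracket, and let s ∈ A be an even element satisfying the classical master equation [s,s] = 0. Then the classical BRST operator δ_s := X_s, defined by δ_s(g) = [s,g] - Q(s)g, is nilpotent: δ_s ∘ δ_s = 0. -/

import Mathlib

/-- The "homological vector field" of an odd Jacobi algebra: `Q(f) = (-1)^{|f|}[f,1]`,
for `f` homogeneous of parity `i`. -/
def ojQ {A : Type*} [Ring A] [Algebra ℝ A] (br : A → A → A) (i : ZMod 2) (f : A) : A :=
  ((-1 : ℝ) ^ i.val) • br f 1

/-- The Hamiltonian vector field of `f` (of parity `i`): `X_f(g) = (-1)^{|f|}[f,g] - Q(f)g`. -/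
def ojX {A : Type*} [Ring A] [Algebra ℝ A] (br : A → A → A) (i : ZMod 2) (f g : A) : A :=
  ((-1 : ℝ) ^ i.val) • br f g - ojQ br i f * g

/-- The classical BRST operator `δ_s = X_s` of an even Maurer–Cartan element `s`
(`[s,s] = 0`) is nilpotent: `δ_s ∘ δ_s = 0`. -/
theorem brst_nilpotent
    {A : Type*} [Ring A] [Algebra ℝ A]
    (𝒜 : ZMod 2 → Submodule ℝ A)
    (hone : (1 : A) ∈ 𝒜 0)
    (hmul : ∀ (i j : ZMod 2) (f g : A), f ∈ 𝒜 i → g ∈ 𝒜 j → f * g ∈ 𝒜 (i + j))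
    (hscomm : ∀ (i j : ZMod 2) (f g : A), f ∈ 𝒜 i → g ∈ 𝒜 j →
      f * g = ((-1 : ℝ) ^ (i.val * j.val)) • (g * f))
    (br : A → A → A)
    (hbraddl : ∀ f g h : A, br (f + g) h = br f h + br g h)
    (hbraddr : ∀ f g h : A, br f (g + h) = br f g + br f h)
    (hbrsmull : ∀ (r : ℝ) (f g : A), br (r • f) g = r • br f g)
    (hbrsmulr : ∀ (r : ℝ) (f g : A), br f (r • g) = r • br f g)
    (hbrgrade : ∀ (i j : ZMod 2) (f g : A), f ∈ 𝒜 i → g ∈ 𝒜 j → br f g ∈ 𝒜 (i + j + 1))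
    (hbrskew : ∀ (i j : ZMod 2) (f g : A), f ∈ 𝒜 i → g ∈ 𝒜 j →
      br f g = -(((-1 : ℝ) ^ ((i.val + 1) * (j.val + 1))) • br g f))
    (hbrjac : ∀ (i j : ZMod 2) (f g h : A), f ∈ 𝒜 i → g ∈ 𝒜 j →
      br f (br g h) = br (br f g) h + ((-1 : ℝ) ^ ((i.val + 1) * (j.val + 1))) • br g (br f h))
    (hbrleib : ∀ (i j : ZMod 2) (f g h : A), f ∈ 𝒜 i → g ∈ 𝒜 j →
      br f (g * h) = br f g * h + ((-1 : ℝ) ^ ((i.val + 1) * j.val)) • (g * br f h)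
        - br f 1 * (g * h))
    (hQbr : ∀ (i j : ZMod 2) (f g : A), f ∈ 𝒜 i → g ∈ 𝒜 j →
      ojQ br (i + j + 1) (br f g)
        = br (ojQ br i f) g + ((-1 : ℝ) ^ (i.val + 1)) • br f (ojQ br j g))
    (s : A) (hs : s ∈ 𝒜 0) (hmc : br s s = 0) :
    ∀ (k : ZMod 2) (g : A), g ∈ 𝒜 k → ojX br 0 s (ojX br 0 s g) = 0 := by

  intro k g hg
  have half : ∀ x : A, x + x = 0 → x = 0 := by
    intro x hx
    have h2 : (2:ℝ) • x = 0 := by rw [two_smul]; exact hx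
    have := congrArg (fun y => ((2:ℝ)⁻¹) • y) h2
    simpa [smul_smul] using this
  have hbr0l : ∀ h : A, br 0 h = 0 := by
    intro h
    have := hbraddl 0 0 h
    rw [add_zero] at this
    exact (left_eq_add.mp this)
  set Qs : A := br s 1 with hQsdef
  have hQsmem : Qs ∈ 𝒜 1 := by simpa using hbrgrade 0 0 s 1 hs hone
  have hv0 : ((0 : ZMod 2)).val = 0 := rfl
  have hv1 : ((1 : ZMod 2)).val = 1 := rfl
  -- Qs * Qs = 0
  have hQs2 : Qs * Qs = 0 := by
    have h := hscomm 1 1 Qs Qs hQsmem hQsmem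
    rw [hv1] at h
    simp only [mul_one, pow_one, neg_one_smul] at h
    exact half _ (by nth_rewrite 2 [h]; exact add_neg_cancel _)
  -- [s,[s,h]] = 0
  have hss : ∀ h : A, br s (br s h) = 0 := by
    intro h
    have hj := hbrjac 0 0 s s h hs hs
    rw [hv0, hmc, hbr0l] at hj
    simp only [pow_one, neg_one_smul, zero_add] at hj
    norm_num at hj
    exact half _ (by nth_rewrite 2 [hj]; exact add_neg_cancel _)
  -- [s, Qs] = 0
  have hsQs : br s Qs = 0 := by
    have hq := hQbr 0 0 s s hs hs
    have h011 : ((0:ZMod 2) + 0 + 1) = 1 := by decide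
    rw [h011] at hq
    unfold ojQ at hq
    rw [hv0, hv1, hmc, hbr0l] at hq
    simp only [pow_zero, pow_one, one_smul, neg_one_smul, smul_zero, hbrsmull, hbrsmulr] at hq
    rw [← hQsdef] at hq
    norm_num at hq
    have hq' : br Qs s = br s Qs := eq_of_sub_eq_zero (by rw [sub_eq_add_neg]; exact hq.symm)
    have hskew := hbrskew 0 1 s Qs hs hQsmem
    rw [hv0, hv1] at hskew
    norm_num at hskew
    rw [hq'] at hskew
    exact half _ (by nth_rewrite 2 [hskew]; exact add_neg_cancel _)
  -- [s, Qs * g] = -(Qs * br s g)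
  have hleib := hbrleib 0 1 s Qs g hs hQsmem
  rw [hv0, hv1, hsQs] at hleib
  simp only [pow_one, neg_one_smul, zero_mul, zero_add] at hleib
  rw [← hQsdef, ← mul_assoc, hQs2, zero_mul, sub_zero] at hleib
  norm_num at hleib
  -- now unfold and finish
  have hsub : ∀ x y : A, br s (x - y) = br s x - br s y := by
    intro x y
    have h1 : x - y = x + (-1:ℝ) • y := by simp [sub_eq_add_neg]
    rw [h1, hbraddr, hbrsmulr]
    simp [sub_eq_add_neg]
  simp only [ojX, ojQ, hv0, pow_zero, one_smul, ← hQsdef]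
  rw [hsub, hss, hleib, mul_sub, ← mul_assoc, hQs2, zero_mul]
  simp
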